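/- Let p > 7 be a prime and let G = Z/pZ. If U and V are square-free sequences over G with |U| = |V| = 3 and |U·V| = 4, then either U and V are both arithmetic progressions in G, or there exist affine bijections f(z) = αz + β and g(z) = γz + δ of G (with α, γ ≠ 0) and elements x, y ∈ G with x ≠ y, x² − x + 1 = 0 and y² − y + 1 = 0, such that f(U) = {0, 1, x} and g(V) = {0, 1, y}. -/

import Mathlib

/-- The weighted product set `S · T` of two sequences (multisets) over a commutative ring. -/
def wProd {G : Type*} [CommRing G] (S T : Multiset G) : Set G :=
  { g | ∃ l1 l2 : List G, (l1 : Multiset G) = S ∧ (l2 : Multiset G) = T ∧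
      (List.zipWith (· * ·) l1 l2).sum = g }

/-- A three-term sequence is an arithmetic progression:
it equals `{a, a + d, a + 2d}` for some `a` and some `d ≠ 0`. -/
def MulIsAP3 {p : ℕ} (U : Multiset (ZMod p)) : Prop :=
  ∃ a d : ZMod p, d ≠ 0 ∧ U = {a, a + d, a + 2 * d}

section msHelpers
variable {α : Type*}

lemma ms2_swap (x y : α) : ({x,y} : Multiset α) = {y,x} := by
  rw [Multiset.insert_eq_cons, Multiset.insert_eq_cons]
  exact Multiset.cons_swap x y 0

lemma ms3_swap12 (x y z : α) : ({x,y,z} : Multiset α) = {y,x,z} := by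
  rw [Multiset.insert_eq_cons, Multiset.insert_eq_cons]
  exact Multiset.cons_swap x y _

lemma ms3_swap23 (x y z : α) : ({x,y,z} : Multiset α) = {x,z,y} := by
  rw [Multiset.insert_eq_cons, Multiset.insert_eq_cons]
  exact congrArg _ (ms2_swap y z)

lemma ms3_rot (x y z : α) : ({x,y,z} : Multiset α) = {y,z,x} := by
  rw [ms3_swap12, ms3_swap23]

lemma coe_list3 (x y z : α) : (([x,y,z] : List α) : Multiset α) = {x,y,z} := rfl

lemma pair_of_coe_eq2 {y z b c : α} (h2 : ({y,z} : Multiset α) = {b,c}) :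
    (y = b ∧ z = c) ∨ (y = c ∧ z = b) := by
  have hy : y ∈ ({b,c} : Multiset α) := by rw [← h2]; simp
  simp only [Multiset.insert_eq_cons, Multiset.mem_cons, Multiset.mem_singleton] at hy
  rcases hy with h' | h'
  · left
    refine ⟨h', ?_⟩
    rw [h', Multiset.insert_eq_cons, Multiset.insert_eq_cons, Multiset.cons_inj_right] at h2
    simpa using h2
  · right
    refine ⟨h', ?_⟩
    rw [h', ms2_swap b c, Multiset.insert_eq_cons, Multiset.insert_eq_cons,
      Multiset.cons_inj_right] at h2
    simpa using h2

lemma list_of_coe_eq3 {l : List α} {a b c : α}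
    (h : (l : Multiset α) = {a,b,c}) :
    l = [a,b,c] ∨ l = [a,c,b] ∨ l = [b,a,c] ∨ l = [b,c,a] ∨ l = [c,a,b] ∨ l = [c,b,a] := by
  have hl : l.length = 3 := by
    have := congrArg Multiset.card h
    simpa using this
  match l, hl with
  | [x,y,z], _ =>
    rw [coe_list3] at h
    have hx : x ∈ ({a,b,c} : Multiset α) := by rw [← h]; simp
    simp only [Multiset.insert_eq_cons, Multiset.mem_cons, Multiset.mem_singleton] at hx
    rcases hx with rfl | rfl | rfl
    · rw [Multiset.insert_eq_cons, Multiset.insert_eq_cons (a := x),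
        Multiset.cons_inj_right] at h
      rcases pair_of_coe_eq2 h with ⟨rfl, rfl⟩ | ⟨rfl, rfl⟩
      · exact Or.inl rfl
      · exact Or.inr (Or.inl rfl)
    · rw [ms3_swap12 a x c, Multiset.insert_eq_cons, Multiset.insert_eq_cons (a := x),
        Multiset.cons_inj_right] at h
      rcases pair_of_coe_eq2 h with ⟨rfl, rfl⟩ | ⟨rfl, rfl⟩
      · exact Or.inr (Or.inr (Or.inl rfl))
      · exact Or.inr (Or.inr (Or.inr (Or.inl rfl)))
    · rw [ms3_rot a b x, ms3_swap12 b x a, Multiset.insert_eq_cons,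
        Multiset.insert_eq_cons (a := x), Multiset.cons_inj_right] at h
      rcases pair_of_coe_eq2 h with ⟨rfl, rfl⟩ | ⟨rfl, rfl⟩
      · exact Or.inr (Or.inr (Or.inr (Or.inr (Or.inr rfl))))
      · exact Or.inr (Or.inr (Or.inr (Or.inr (Or.inl rfl))))

lemma ncard5 {x1 x2 x3 x4 x5 : α}
    (h12 : x1 ≠ x2) (h13 : x1 ≠ x3) (h14 : x1 ≠ x4) (h15 : x1 ≠ x5)
    (h23 : x2 ≠ x3) (h24 : x2 ≠ x4) (h25 : x2 ≠ x5)
    (h34 : x3 ≠ x4) (h35 : x3 ≠ x5) (h45 : x4 ≠ x5) :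
    ({x1,x2,x3,x4,x5} : Set α).ncard = 5 := by
  rw [Set.ncard_insert_of_notMem (by simp only [Set.mem_insert_iff, Set.mem_singleton_iff]; push_neg; exact ⟨h12,h13,h14,h15⟩) (Set.toFinite _)]
  rw [Set.ncard_insert_of_notMem (by simp only [Set.mem_insert_iff, Set.mem_singleton_iff]; push_neg; exact ⟨h23,h24,h25⟩) (Set.toFinite _)]
  rw [Set.ncard_insert_of_notMem (by simp only [Set.mem_insert_iff, Set.mem_singleton_iff]; push_neg; exact ⟨h34,h35⟩) (Set.toFinite _)]
  rw [Set.ncard_insert_of_notMem (by simpa using h45) (Set.toFinite _)]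
  simp

lemma five_le {x1 x2 x3 x4 x5 : α} {S : Set α} (hS : S.Finite)
    (m1 : x1 ∈ S) (m2 : x2 ∈ S) (m3 : x3 ∈ S) (m4 : x4 ∈ S) (m5 : x5 ∈ S)
    (h12 : x1 ≠ x2) (h13 : x1 ≠ x3) (h14 : x1 ≠ x4) (h15 : x1 ≠ x5)
    (h23 : x2 ≠ x3) (h24 : x2 ≠ x4) (h25 : x2 ≠ x5)
    (h34 : x3 ≠ x4) (h35 : x3 ≠ x5) (h45 : x4 ≠ x5) : 5 ≤ S.ncard := by
  have hsub : ({x1,x2,x3,x4,x5} : Set α) ⊆ S := by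
    intro w hw
    rcases hw with rfl | rfl | rfl | rfl | rfl <;> assumption
  calc 5 = ({x1,x2,x3,x4,x5} : Set α).ncard :=
        (ncard5 h12 h13 h14 h15 h23 h24 h25 h34 h35 h45).symm
    _ ≤ S.ncard := Set.ncard_le_ncard hsub hS

end msHelpers

lemma wProd_eq {G : Type*} [CommRing G] (a b c d e f : G) :
    wProd {a,b,c} {d,e,f} =
      {a*d+b*e+c*f, a*d+b*f+c*e, a*e+b*d+c*f, a*e+b*f+c*d, a*f+b*d+c*e, a*f+b*e+c*d} := by
  ext z
  constructor
  · rintro ⟨l1, l2, h1, h2, rfl⟩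
    rcases list_of_coe_eq3 h1 with rfl|rfl|rfl|rfl|rfl|rfl <;>
      rcases list_of_coe_eq3 h2 with rfl|rfl|rfl|rfl|rfl|rfl <;>
      · simp only [List.zipWith, List.sum_cons, List.sum_nil, Set.mem_insert_iff,
          Set.mem_singleton_iff]
        ring_nf
        tauto
  · intro hz
    simp only [Set.mem_insert_iff, Set.mem_singleton_iff] at hz
    have sumeq : ∀ x y u v w t : G,
        (List.zipWith (· * ·) [x,y,u] [v,w,t]).sum = x*v+y*w+u*t := by
      intro x y u v w t
      simp only [List.zipWith, List.sum_cons, List.sum_nil]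
      ring
    rcases hz with rfl|rfl|rfl|rfl|rfl|rfl
    · exact ⟨[a,b,c], [d,e,f], rfl, rfl, sumeq ..⟩
    · exact ⟨[a,b,c], [d,f,e], rfl, by rw [coe_list3]; exact (ms3_swap23 d e f).symm, sumeq ..⟩
    · exact ⟨[a,b,c], [e,d,f], rfl, by rw [coe_list3]; exact (ms3_swap12 d e f).symm, sumeq ..⟩
    · exact ⟨[a,b,c], [e,f,d], rfl, by rw [coe_list3]; exact (ms3_rot d e f).symm, sumeq ..⟩
    · exact ⟨[a,b,c], [f,d,e], rfl, by rw [coe_list3]; exact ms3_rot f d e, sumeq ..⟩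
    · exact ⟨[a,b,c], [f,e,d], rfl, by rw [coe_list3, ms3_rot f e d, ms3_swap12 e d f], sumeq ..⟩

lemma key {p : ℕ} [Fact p.Prime] (u v : ZMod p)
    (hu0 : u ≠ 0) (hu1 : u ≠ 1) (hv0 : v ≠ 0) (hv1 : v ≠ 1)
    (h4 : ({1+u*v, u+v, u*v, v, u, 1} : Set (ZMod p)).ncard = 4) :
    ((u = 2 ∨ u = -1 ∨ 2*u = 1) ∧ (v = 2 ∨ v = -1 ∨ 2*v = 1)) ∨
      (u^2 - u + 1 = 0 ∧ v^2 - v + 1 = 0) := by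
  set T : Set (ZMod p) := {1+u*v, u+v, u*v, v, u, 1} with hT
  have hTfin : T.Finite := Set.toFinite _
  have hm1uv : (1+u*v) ∈ T := by simp [hT]
  have hmusv : (u+v) ∈ T := by simp [hT]
  have hmuv : (u*v) ∈ T := by simp [hT]
  have hmv : v ∈ T := by simp [hT]
  have hmu : u ∈ T := by simp [hT]
  have hm1 : (1:ZMod p) ∈ T := by simp [hT]
  have f1 : (1:ZMod p) ≠ u := hu1.symm
  have f2 : (1:ZMod p) ≠ v := hv1.symm
  have f3 : u ≠ u*v := fun h => hv1 (mul_left_cancel₀ hu0 (show u*v = u*1 by linear_combination -h))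
  have f4 : v ≠ u*v := fun h => hu1 (mul_right_cancel₀ hv0 (show u*v = 1*v by linear_combination -h))
  have f5 : u ≠ u+v := fun h => hv0 (by linear_combination -h)
  have f6 : v ≠ u+v := fun h => hu0 (by linear_combination -h)
  have f7 : u*v ≠ 1+u*v := fun h => one_ne_zero (show (1:ZMod p) = 0 by linear_combination -h)
  have f8 : (1:ZMod p) ≠ 1+u*v := fun h =>
    (mul_eq_zero.mp (show u*v = 0 by linear_combination -h)).elim hu0 hv0
  have f9 : (1+u*v) ≠ u+v := fun h =>
    (mul_eq_zero.mp (show (u-1)*(v-1) = 0 by linear_combination h)).elim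
      (fun h' => hu1 (by linear_combination h')) (fun h' => hv1 (by linear_combination h'))
  have f10 : (1:ZMod p) ≠ 2 := fun h => one_ne_zero (show (1:ZMod p) = 0 by linear_combination -h)
  have contra1 : ¬(u*v = 1) → ¬(u+v = 1) → ¬(u = v) → ¬(u*v = u+v) → False := by
    intro hA hB hC hF
    have h5 : 5 ≤ T.ncard :=
      five_le hTfin hm1 hmu hmv hmuv hmusv
        f1 f2 (fun h => hA h.symm) (fun h => hB h.symm)
        hC f3 f5 f4 f6 (fun h => hF h)
    omega
  have contra2 : ¬(u*v = 1) → ¬(u = v) → ¬(u = 1+u*v) → ¬(v = 1+u*v) → False := by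
    intro hA hC hD hE
    have h5 : 5 ≤ T.ncard :=
      five_le hTfin hm1 hmu hmv hmuv hm1uv
        f1 f2 (fun h => hA h.symm) f8
        hC f3 hD f4 hE f7
    omega
  by_cases hA : u*v = 1
  · by_cases hB : u+v = 1
    · exact Or.inr ⟨by linear_combination u*hB - hA, by linear_combination v*hB - hA⟩
    · by_cases hC : u = v
      · subst hC
        rcases mul_eq_zero.mp (show (u-1)*(u+1) = 0 by linear_combination hA) with h' | h'
        · exact absurd (by linear_combination h') hu1
        · have hm : u = -1 := by linear_combination h'
          exact Or.inl ⟨Or.inr (Or.inl hm), Or.inr (Or.inl hm)⟩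
      · by_cases hD : u = 1+u*v
        · have h2u : u = 2 := by linear_combination hD + hA
          have h2v : 2*v = 1 := by linear_combination hA - v*h2u
          exact Or.inl ⟨Or.inl h2u, Or.inr (Or.inr h2v)⟩
        · by_cases hE : v = 1+u*v
          · have h2v : v = 2 := by linear_combination hE + hA
            have h2u : 2*u = 1 := by linear_combination hA - u*h2v
            exact Or.inl ⟨Or.inr (Or.inr h2u), Or.inl h2v⟩
          · by_cases hF : u*v = u+v
            · have hB' : u+v = 1 := hF.symm.trans hA
              exact Or.inr ⟨by linear_combination u*hB' - hA, by linear_combination v*hB' - hA⟩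
            · have h5 : 5 ≤ T.ncard :=
                five_le (x2 := (2:ZMod p)) hTfin hm1 (by simp [hT, hA]; norm_num) hmu hmv hmusv
                  f10 f1 f2 (fun h => hB h.symm)
                  (fun h => hD (by linear_combination -h - hA))
                  (fun h => hE (by linear_combination -h - hA))
                  (fun h => f9 (by rw [hA]; linear_combination h))
                  hC f5 f6
              omega
  · by_cases hB : u+v = 1
    · by_cases hC : u = v
      · subst hC
        have h2u : 2*u = 1 := by linear_combination hB
        exact Or.inl ⟨Or.inr (Or.inr h2u), Or.inr (Or.inr h2u)⟩
      · by_cases hD : u = 1+u*v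
        · rcases mul_eq_zero.mp (show (u-1)*(u+1) = 0 by linear_combination hD + u*hB) with h' | h'
          · exact absurd (by linear_combination h') hu1
          · have hmu' : u = -1 := by linear_combination h'
            have h2v : v = 2 := by linear_combination hB - hmu'
            exact Or.inl ⟨Or.inr (Or.inl hmu'), Or.inl h2v⟩
        · by_cases hE : v = 1+u*v
          · rcases mul_eq_zero.mp (show (v-1)*(v+1) = 0 by linear_combination hE + v*hB) with h' | h'
            · exact absurd (by linear_combination h') hv1
            · have hmv' : v = -1 := by linear_combination h'
              have h2u : u = 2 := by linear_combination hB - hmv'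
              exact Or.inl ⟨Or.inl h2u, Or.inr (Or.inl hmv')⟩
          · by_cases hF : u*v = u+v
            · exact absurd (hF.trans hB) hA
            · exact (contra2 hA hC hD hE).elim
    · by_cases hC : u = v
      · subst hC
        by_cases hD : u = 1+u*u
        · exact Or.inr ⟨by linear_combination -hD, by linear_combination -hD⟩
        · by_cases hF : u*u = u+u
          · have h2 : u = 2 := by
              rcases mul_eq_zero.mp (show u*(u-2) = 0 by linear_combination hF) with h'|h'
              · exact absurd h' hu0
              · linear_combination h'
            exact Or.inl ⟨Or.inl h2, Or.inl h2⟩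
          · have h5 : 5 ≤ T.ncard :=
              five_le hTfin hm1 hmu hmuv hm1uv hmusv
                f1 (fun h => hA h.symm) f8 (fun h => hB h.symm)
                f3 hD f5 f7 (fun h => hF h) f9
            omega
      · by_cases hD : u = 1+u*v
        · by_cases hE : v = 1+u*v
          · exact absurd (by linear_combination hD - hE) hC
          · by_cases hF : u*v = u+v
            · have hmv' : v = -1 := by linear_combination -hF - hD
              have h2u : 2*u = 1 := by rw [hmv'] at hF; linear_combination -hF
              exact Or.inl ⟨Or.inr (Or.inr h2u), Or.inr (Or.inl hmv')⟩
            · exact (contra1 hA hB hC hF).elim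
        · by_cases hE : v = 1+u*v
          · by_cases hF : u*v = u+v
            · have hmu' : u = -1 := by linear_combination -hF - hE
              have h2v : 2*v = 1 := by rw [hmu'] at hF; linear_combination -hF
              exact Or.inl ⟨Or.inr (Or.inl hmu'), Or.inr (Or.inr h2v)⟩
            · exact (contra1 hA hB hC hF).elim
          · by_cases hF : u*v = u+v
            · exact (contra2 hA hC hD hE).elim
            · exact (contra1 hA hB hC hF).elim

lemma ap_of {p : ℕ} [Fact p.Prime] {a b c u : ZMod p} (hba : b - a ≠ 0)
    (hc : c = a + u*(b-a)) (hu : u = 2 ∨ u = -1 ∨ 2*u = 1) :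
    MulIsAP3 {a, b, c} := by
  rcases hu with h2 | hm1 | h2u
  · refine ⟨a, b - a, hba, ?_⟩
    have h1 : a + (b-a) = b := by ring
    have h2' : a + 2*(b-a) = c := by rw [hc, h2]
    rw [h1, h2']
  · refine ⟨c, b - a, hba, ?_⟩
    have h1 : c + (b-a) = a := by rw [hc, hm1]; ring
    have h2' : c + 2*(b-a) = b := by rw [hc, hm1]; ring
    rw [h1, h2']
    exact (ms3_rot c a b).symm
  · have hu0 : u ≠ 0 := fun h => one_ne_zero (show (1:ZMod p) = 0 by linear_combination 2*h - h2u)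
    refine ⟨a, u*(b-a), mul_ne_zero hu0 hba, ?_⟩
    have h1 : a + u*(b-a) = c := hc.symm
    have h2' : a + 2*(u*(b-a)) = b := by linear_combination (b-a)*h2u
    rw [h1, h2']
    exact ms3_swap23 a b c

lemma map3 {p : ℕ} (g : ZMod p → ZMod p) (a b c : ZMod p) :
    ({a,b,c} : Multiset (ZMod p)).map g = {g a, g b, g c} := by
  simp [Multiset.insert_eq_cons]

lemma map_std {p : ℕ} [Fact p.Prime] {a b c u : ZMod p} (hba : b - a ≠ 0)
    (hc : c = a + u*(b-a)) :
    ({a,b,c} : Multiset (ZMod p)).map (fun z => (b-a)⁻¹ * z + -(a*(b-a)⁻¹)) = {0, 1, u} := by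
  rw [map3]
  have g1 : (b-a)⁻¹ * a + -(a*(b-a)⁻¹) = 0 := by ring
  have g2 : (b-a)⁻¹ * b + -(a*(b-a)⁻¹) = 1 := by
    have h' : (b-a)⁻¹ * b + -(a*(b-a)⁻¹) = (b-a)⁻¹*(b-a) := by ring
    rw [h', inv_mul_cancel₀ hba]
  have g3 : (b-a)⁻¹ * c + -(a*(b-a)⁻¹) = u := by
    have h' : (b-a)⁻¹ * (a + u*(b-a)) + -(a*(b-a)⁻¹) = u*((b-a)⁻¹*(b-a)) := by ring
    rw [hc, h', inv_mul_cancel₀ hba, mul_one]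
  rw [g1, g2, g3]

lemma map_std' {p : ℕ} [Fact p.Prime] {d e f v : ZMod p} (hed : e - d ≠ 0)
    (hf : f = d + v*(e-d)) :
    ({d,e,f} : Multiset (ZMod p)).map (fun z => -(e-d)⁻¹ * z + (1 + d*(e-d)⁻¹)) = {0, 1, 1-v} := by
  rw [map3]
  have g1 : -(e-d)⁻¹ * d + (1 + d*(e-d)⁻¹) = 1 := by ring
  have g2 : -(e-d)⁻¹ * e + (1 + d*(e-d)⁻¹) = 0 := by
    have h' : -(e-d)⁻¹ * e + (1 + d*(e-d)⁻¹) = 1 - (e-d)⁻¹*(e-d) := by ring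
    rw [h', inv_mul_cancel₀ hed, sub_self]
  have g3 : -(e-d)⁻¹ * f + (1 + d*(e-d)⁻¹) = 1 - v := by
    have h' : -(e-d)⁻¹ * (d + v*(e-d)) + (1 + d*(e-d)⁻¹) = 1 - v*((e-d)⁻¹*(e-d)) := by ring
    rw [hf, h', inv_mul_cancel₀ hed, mul_one]
  rw [g1, g2, g3]
  exact ms3_swap12 1 0 (1-v)

theorem stmt3 (p : ℕ) (hp : p.Prime) (hp7 : 7 < p)
    (U V : Multiset (ZMod p)) (hU : U.Nodup) (hV : V.Nodup)
    (hUc : Multiset.card U = 3) (hVc : Multiset.card V = 3)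
    (hcard : (wProd U V).ncard = 4) :
    (MulIsAP3 U ∧ MulIsAP3 V) ∨
    (∃ α β γ δ x y : ZMod p, α ≠ 0 ∧ γ ≠ 0 ∧ x ≠ y ∧
      x ^ 2 - x + 1 = 0 ∧ y ^ 2 - y + 1 = 0 ∧
      U.map (fun z => α * z + β) = {0, 1, x} ∧
      V.map (fun z => γ * z + δ) = {0, 1, y}) := by
  haveI : Fact p.Prime := ⟨hp⟩
  obtain ⟨a, b, c, rfl⟩ := Multiset.card_eq_three.mp hUc
  obtain ⟨d, e, f, rfl⟩ := Multiset.card_eq_three.mp hVc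
  simp only [Multiset.insert_eq_cons, Multiset.nodup_cons, Multiset.mem_cons,
    Multiset.mem_singleton, Multiset.nodup_singleton, and_true, not_or] at hU hV
  obtain ⟨⟨hab, hac⟩, hbc⟩ := hU
  obtain ⟨⟨hde, hdf⟩, hef⟩ := hV
  have hba : b - a ≠ 0 := sub_ne_zero.mpr (Ne.symm hab)
  have hed : e - d ≠ 0 := sub_ne_zero.mpr (Ne.symm hde)
  set u : ZMod p := (c - a) * (b - a)⁻¹ with hu
  set v : ZMod p := (f - d) * (e - d)⁻¹ with hv
  have hc : c = a + u*(b-a) := by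
    rw [hu]
    field_simp
    ring
  have hf : f = d + v*(e-d) := by
    rw [hv]
    field_simp
    ring
  have hu0 : u ≠ 0 := by
    intro h
    rw [h] at hc
    exact hac (by rw [hc]; ring)
  have hu1 : u ≠ 1 := by
    intro h
    rw [h] at hc
    exact hbc (by rw [hc]; ring)
  have hv0 : v ≠ 0 := by
    intro h
    rw [h] at hf
    exact hdf (by rw [hf]; ring)
  have hv1 : v ≠ 1 := by
    intro h
    rw [h] at hf
    exact hef (by rw [hf]; ring)
  -- rewrite the weighted product set
  rw [wProd_eq] at hcard
  set K : ZMod p := (b-a)*(e-d) with hK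
  have hKne : K ≠ 0 := mul_ne_zero hba hed
  set L : ZMod p := 3*a*d + a*(e-d)*(1+v) + d*(b-a)*(1+u) with hL
  have himg : ({a*d+b*e+c*f, a*d+b*f+c*e, a*e+b*d+c*f, a*e+b*f+c*d, a*f+b*d+c*e, a*f+b*e+c*d}
      : Set (ZMod p)) =
      (fun z => K*z + L) '' ({1+u*v, u+v, u*v, v, u, 1} : Set (ZMod p)) := by
    simp only [Set.image_insert_eq, Set.image_singleton]
    rw [hc, hf, hK, hL]
    refine congrArg₂ insert (by ring) (congrArg₂ insert (by ring) (congrArg₂ insert (by ring)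
      (congrArg₂ insert (by ring) (congrArg₂ insert (by ring) ?_))))
    exact congrArg (fun w => ({w} : Set (ZMod p))) (by ring)
  rw [himg, Set.ncard_image_of_injective _
    (fun z w h => mul_left_cancel₀ hKne (show K*z = K*w by linear_combination h))] at hcard
  rcases key u v hu0 hu1 hv0 hv1 hcard with ⟨hgu, hgv⟩ | ⟨hgu, hgv⟩
  · exact Or.inl ⟨ap_of hba hc hgu, ap_of hed hf hgv⟩
  · -- exceptional case
    right
    have hp3 : (3 : ZMod p) ≠ 0 := by
      have : ((3:ℕ) : ZMod p) ≠ 0 := by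
        rw [Ne, ZMod.natCast_eq_zero_iff]
        intro hdvd
        have := Nat.le_of_dvd (by norm_num) hdvd
        omega
      simpa using this
    by_cases huv : u = v
    · -- use y = 1 - v for V
      refine ⟨(b-a)⁻¹, -(a*(b-a)⁻¹), -(e-d)⁻¹, 1 + d*(e-d)⁻¹, u, 1 - v,
        inv_ne_zero hba, neg_ne_zero.mpr (inv_ne_zero hed), ?_, hgu, ?_, ?_, ?_⟩
      · intro h
        have h2u : 2*u = 1 := by linear_combination h + huv
        exact hp3 (by linear_combination 4*hgu - (2*u-1)*h2u)
      · linear_combination hgv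
      · exact map_std hba hc
      · exact map_std' hed hf
    · refine ⟨(b-a)⁻¹, -(a*(b-a)⁻¹), (e-d)⁻¹, -(d*(e-d)⁻¹), u, v,
        inv_ne_zero hba, inv_ne_zero hed, huv, hgu, hgv, ?_, ?_⟩
      · exact map_std hba hc
      · exact map_std hed hf
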